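/- arXiv:2603.13022 — 8 statements merged into one kernel-verified Lean document; each statement's English description precedes it below -/
import Mathlib

section
/- Let E be an exact category and let L --f--> M --g--> N be a sequence in E with gf = 0. If f is a monomorphism, then the sequence is left Ext_E-acyclic if and only if it is left Hom-acyclic. -/
open CategoryTheory CategoryTheory.Limits CategoryTheory.Pretriangulated

universe v u

/-- A Quillen exact structure on a preadditive category: a class of kernel-cokernel
pairs (conflations) satisfying the axioms of an exact category. -/
structure ExactStructure (C : Type u) [Category.{v} C] [Preadditive C] :
    Type (max u v) where
  IsConflation : ∀ ⦃X Y Z : C⦄, (X ⟶ Y) → (Y ⟶ Z) → Prop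
  comp_zero : ∀ ⦃X Y Z : C⦄ ⦃i : X ⟶ Y⦄ ⦃p : Y ⟶ Z⦄, IsConflation i p → i ≫ p = 0
  isKernel : ∀ ⦃X Y Z : C⦄ ⦃i : X ⟶ Y⦄ ⦃p : Y ⟶ Z⦄ (h : IsConflation i p),
    Nonempty (IsLimit (KernelFork.ofι i (comp_zero h)))
  isCokernel : ∀ ⦃X Y Z : C⦄ ⦃i : X ⟶ Y⦄ ⦃p : Y ⟶ Z⦄ (h : IsConflation i p),
    Nonempty (IsColimit (CokernelCofork.ofπ p (comp_zero h)))
  defl_id : ∀ X : C, ∃ (K : C) (i : K ⟶ X), IsConflation i (𝟙 X)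
  infl_id : ∀ X : C, ∃ (Z : C) (p : X ⟶ Z), IsConflation (𝟙 X) p
  defl_comp : ∀ ⦃X Y Z : C⦄ ⦃p : X ⟶ Y⦄ ⦃q : Y ⟶ Z⦄,
    (∃ (K : C) (i : K ⟶ X), IsConflation i p) → (∃ (K : C) (i : K ⟶ Y), IsConflation i q) →
    ∃ (K : C) (i : K ⟶ X), IsConflation i (p ≫ q)
  infl_comp : ∀ ⦃X Y Z : C⦄ ⦃i : X ⟶ Y⦄ ⦃j : Y ⟶ Z⦄,
    (∃ (W : C) (p : Y ⟶ W), IsConflation i p) → (∃ (W : C) (p : Z ⟶ W), IsConflation j p) →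
    ∃ (W : C) (p : Z ⟶ W), IsConflation (i ≫ j) p
  defl_pullback : ∀ ⦃Y Z A : C⦄ ⦃p : Y ⟶ Z⦄,
    (∃ (K : C) (i : K ⟶ Y), IsConflation i p) → ∀ f : A ⟶ Z,
    ∃ (B : C) (q : B ⟶ A) (g : B ⟶ Y),
      (∃ (K : C) (i : K ⟶ B), IsConflation i q) ∧ g ≫ p = q ≫ f
  infl_pushout : ∀ ⦃X Y A : C⦄ ⦃i : X ⟶ Y⦄,
    (∃ (W : C) (p : Y ⟶ W), IsConflation i p) → ∀ f : X ⟶ A,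
    ∃ (B : C) (j : A ⟶ B) (g : Y ⟶ B),
      (∃ (W : C) (p : B ⟶ W), IsConflation j p) ∧ i ≫ g = f ≫ j

namespace ExactStructure

variable {C : Type u} [Category.{v} C] [Preadditive C] (E : ExactStructure C)

/-- `p` is a deflation (admissible epimorphism). -/
def Deflation {Y Z : C} (p : Y ⟶ Z) : Prop :=
  ∃ (K : C) (i : K ⟶ Y), E.IsConflation i p

/-- `i` is an inflation (admissible monomorphism). -/
def Inflation {X Y : C} (i : X ⟶ Y) : Prop :=
  ∃ (Z : C) (p : Y ⟶ Z), E.IsConflation i p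

/-- The sequence `L ⟶ M ⟶ N` is left `Ext`-acyclic at `M`. -/
def LeftExtAcyclic {L M N : C} (f : L ⟶ M) (g : M ⟶ N) : Prop :=
  ∀ ⦃A : C⦄ (a : A ⟶ M), a ≫ g = 0 →
    ∃ (B : C) (p : B ⟶ A) (h : B ⟶ L), E.Deflation p ∧ p ≫ a = h ≫ f

/-- The sequence `L ⟶ M ⟶ N` is left Hom-acyclic at `M`, i.e. `f` is a weak kernel of `g`. -/
def LeftHomAcyclic {L M N : C} (f : L ⟶ M) (g : M ⟶ N) : Prop :=
  ∀ ⦃A : C⦄ (a : A ⟶ M), a ≫ g = 0 → ∃ h : A ⟶ L, a = h ≫ f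

/-- A cochain complex is left `Ext`-acyclic in degree `n`. -/
def LeftExtAcyclicAt (X : CochainComplex C ℤ) (n : ℤ) : Prop :=
  ∀ ⦃A : C⦄ (a : A ⟶ X.X n), a ≫ X.d n (n + 1) = 0 →
    ∃ (B : C) (p : B ⟶ A) (h : B ⟶ X.X (n - 1)),
      E.Deflation p ∧ p ≫ a = h ≫ X.d (n - 1) n

/-- A cochain complex is `E`-acyclic in degree `n`: the differentials around degree `n`
factor through a conflation. -/
def AcyclicAt (X : CochainComplex C ℤ) (n : ℤ) : Prop :=
  ∃ (K Q : C) (pK : X.X (n - 1) ⟶ K) (iK : K ⟶ X.X n)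
    (pQ : X.X n ⟶ Q) (iQ : Q ⟶ X.X (n + 1)),
    E.Deflation pK ∧ E.Inflation iQ ∧ E.IsConflation iK pQ ∧
    X.d (n - 1) n = pK ≫ iK ∧ X.d n (n + 1) = pQ ≫ iQ

end ExactStructure

variable {C : Type u} [Category.{v} C] [Preadditive C]

/-- If `f` is a monomorphism, the sequence `L ⟶ M ⟶ N` is left Ext-acyclic iff it is
left Hom-acyclic. -/
theorem stmt_0 (E : ExactStructure C) {L M N : C} (f : L ⟶ M) (g : M ⟶ N)
    (hfg : f ≫ g = 0) (hf : Mono f) :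
    E.LeftExtAcyclic f g ↔ ExactStructure.LeftHomAcyclic f g := by
  constructor
  · intro hExt A a ha
    obtain ⟨B, p, h, ⟨K, i, hcon⟩, hpa⟩ := hExt a ha
    have hcok := (E.isCokernel hcon).some
    have hepi : Epi p := epi_of_isColimit_cofork hcok
    have hih : i ≫ h = 0 := by
      rw [← cancel_mono f]
      simp only [Category.assoc, ← hpa, zero_comp]
      rw [← Category.assoc, E.comp_zero hcon, zero_comp]
    obtain ⟨h', hh'⟩ := CokernelCofork.IsColimit.desc' hcok h hih
    simp only [Cofork.π_ofπ] at hh'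
    refine ⟨h', ?_⟩
    rw [← cancel_epi p, ← Category.assoc, hh', hpa]
  · intro hHom A a ha
    obtain ⟨h, hh⟩ := hHom a ha
    obtain ⟨K, i, hcon⟩ := E.defl_id A
    exact ⟨A, 𝟙 A, h, ⟨K, i, hcon⟩, by simpa using hh⟩
end

section
/- Let F be an exact category and E ⊆ F a resolving subcategory. A sequence L --f--> M --g--> N with L, M, N in E and gf = 0 is left Ext_F-acyclic if and only if it is left Ext_E-acyclic. -/
open CategoryTheory CategoryTheory.Limits CategoryTheory.Pretriangulated

universe v u

variable {C : Type u} [Category.{v} C] [Preadditive C]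

/-- For a resolving subcategory `E ⊆ F` (given by the predicate `P`), a sequence with
objects in `E` is left Ext_F-acyclic iff it is left Ext_E-acyclic. -/
theorem stmt_2 (F : ExactStructure C) (P : C → Prop)
    -- `P` is extension-closed (fully exact subcategory)
    (hext : ∀ ⦃X Y Z : C⦄ (i : X ⟶ Y) (p : Y ⟶ Z),
      F.IsConflation i p → P X → P Z → P Y)
    -- (R1): every object of `F` admits a deflation from an object of `E`
    (hgen : ∀ M : C, ∃ (L : C) (p : L ⟶ M), P L ∧ F.Deflation p)
    -- (R2): `E` is deflation-closed in `F`
    (hdefl : ∀ ⦃X Y Z : C⦄ (i : X ⟶ Y) (p : Y ⟶ Z),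
      F.IsConflation i p → P Y → P Z → P X)
    {L M N : C} (f : L ⟶ M) (g : M ⟶ N) (hL : P L) (hM : P M) (hN : P N)
    (hfg : f ≫ g = 0) :
    F.LeftExtAcyclic f g ↔
      (∀ ⦃A : C⦄, P A → ∀ a : A ⟶ M, a ≫ g = 0 →
        ∃ (B : C) (p : B ⟶ A) (h : B ⟶ L), P B ∧
          (∃ (K : C) (i : K ⟶ B), F.IsConflation i p ∧ P K) ∧ p ≫ a = h ≫ f) := by
  constructor
  · intro hac A hA a hag
    obtain ⟨B', p', h', hp', hcomm⟩ := hac a hag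
    obtain ⟨B, q, hB, hq⟩ := hgen B'
    obtain ⟨K, i, hKi⟩ := F.defl_comp hq hp'
    refine ⟨B, q ≫ p', q ≫ h', hB, ⟨K, i, hKi, hdefl i (q ≫ p') hKi hB hA⟩, ?_⟩
    simp only [Category.assoc, hcomm]
  · intro hac A a hag
    obtain ⟨A', q, hA', hq⟩ := hgen A
    have hqa : (q ≫ a) ≫ g = 0 := by rw [Category.assoc, hag, Limits.comp_zero]
    obtain ⟨B, p, h, _, ⟨K, i, hKi, _⟩, hcomm⟩ := hac hA' (q ≫ a) hqa
    refine ⟨B, p ≫ q, h, F.defl_comp ⟨K, i, hKi⟩ hq, ?_⟩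
    rw [Category.assoc, hcomm]
end

section
/- Let E be an exact category and f : X → Y a morphism of cochain complexes over E. If X is left Ext_E-acyclic in degree n+1 and Y is left Ext_E-acyclic in degree n, then the mapping cone of f is left Ext_E-acyclic in degree n. -/
open CategoryTheory CategoryTheory.Limits CategoryTheory.Pretriangulated

universe v u

variable {C : Type u} [Category.{v} C] [Preadditive C] [HasBinaryBiproducts C]

/-- If `X` is left Ext-acyclic in degree `n+1` and `Y` is left Ext-acyclic in degree `n`,
then `cone(f)` is left Ext-acyclic in degree `n`. -/
theorem stmt_3 (E : ExactStructure C) {X Y : CochainComplex C ℤ} (f : X ⟶ Y) (n : ℤ)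
    (hX : E.LeftExtAcyclicAt X (n + 1)) (hY : E.LeftExtAcyclicAt Y n) :
    E.LeftExtAcyclicAt (CochainComplex.mappingCone f) n := by
  open CochainComplex.mappingCone in
  intro A a ha
  set a₁ : A ⟶ X.X (n + 1) := a ≫ (fst f).1.v n (n + 1) rfl with ha₁
  set a₂ : A ⟶ Y.X n := a ≫ (snd f).v n n (add_zero n) with ha₂
  clear_value a₁ a₂
  have hfst : a₁ ≫ X.d (n + 1) (n + 1 + 1) = 0 := by
    have := ha =≫ (fst f).1.v (n + 1) (n + 1 + 1) rfl
    rw [zero_comp, Category.assoc,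
      CochainComplex.mappingCone.d_fst_v f n (n + 1) (n + 1 + 1) rfl rfl] at this
    simpa [ha₁] using this
  have hsnd : a₁ ≫ f.f (n + 1) + a₂ ≫ Y.d n (n + 1) = 0 := by
    have := ha =≫ (snd f).v (n + 1) (n + 1) (add_zero _)
    rw [zero_comp, Category.assoc,
      CochainComplex.mappingCone.d_snd_v f n (n + 1) rfl] at this
    simpa [ha₁, ha₂, Preadditive.comp_add] using this
  obtain ⟨B₁, p₁, h₁', hp₁, hc₁'⟩ := hX a₁ hfst
  set h₁ : B₁ ⟶ X.X n := h₁' ≫ (X.XIsoOfEq (show n + 1 - 1 = n by omega)).hom with hh₁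
  have hc₁ : p₁ ≫ a₁ = h₁ ≫ X.d n (n + 1) := by
    rw [hh₁, Category.assoc, HomologicalComplex.XIsoOfEq_hom_comp_d]
    exact hc₁'
  clear_value h₁
  set b : B₁ ⟶ Y.X n := p₁ ≫ a₂ + h₁ ≫ f.f n with hb
  clear_value b
  have h1 : a₂ ≫ Y.d n (n + 1) = -(a₁ ≫ f.f (n + 1)) :=
    eq_neg_of_add_eq_zero_right hsnd
  have hbd : b ≫ Y.d n (n + 1) = 0 := by
    rw [hb, Preadditive.add_comp, Category.assoc, Category.assoc, h1,
      f.comm n (n + 1), Preadditive.comp_neg, reassoc_of% hc₁]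
    simp
  obtain ⟨B₂, p₂, h₂, hp₂, hc₂⟩ := hY b hbd
  have h2 : p₁ ≫ a₂ = b - h₁ ≫ f.f n := eq_sub_of_add_eq hb.symm
  refine ⟨B₂, p₂ ≫ p₁,
    -(p₂ ≫ h₁) ≫ (CochainComplex.mappingCone.inl f).v n (n - 1) (by omega) +
      h₂ ≫ (CochainComplex.mappingCone.inr f).f (n - 1), E.defl_comp hp₂ hp₁, ?_⟩
  rw [CochainComplex.mappingCone.ext_to_iff f n (n + 1) rfl]
  have key1 : p₂ ≫ p₁ ≫ a₁ = p₂ ≫ h₁ ≫ X.d n (n + 1) := p₂ ≫= hc₁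
  have key2 : p₂ ≫ p₁ ≫ a₂ = h₂ ≫ Y.d (n - 1) n - p₂ ≫ h₁ ≫ f.f n := by
    rw [← Category.assoc p₂ p₁, Category.assoc, h2, Preadditive.comp_sub, hc₂]
  constructor
  · simp only [Category.assoc]
    rw [← ha₁, key1]
    simp only [Preadditive.add_comp, Preadditive.neg_comp, Category.assoc,
      CochainComplex.mappingCone.d_fst_v f (n - 1) n (n + 1) (by omega) rfl,
      Preadditive.comp_neg,
      CochainComplex.mappingCone.inl_v_fst_v_assoc,
      CochainComplex.mappingCone.inr_f_fst_v_assoc, zero_comp, comp_zero,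
      Category.id_comp, neg_neg, add_zero]
  · simp only [Category.assoc]
    rw [← ha₂, key2]
    simp only [CochainComplex.mappingCone.d_snd_v f (n - 1) n (by omega),
      Preadditive.add_comp, Preadditive.neg_comp, Preadditive.comp_add,
      Category.assoc,
      CochainComplex.mappingCone.inl_v_fst_v_assoc,
      CochainComplex.mappingCone.inl_v_snd_v_assoc,
      CochainComplex.mappingCone.inr_f_fst_v_assoc,
      CochainComplex.mappingCone.inr_f_snd_v_assoc,
      Category.id_comp, zero_comp, comp_zero, add_zero, zero_add]
    abel
end

section
/- Let E be an exact category and f : X → Y a morphism of cochain complexes over E. If X and cone(f) are both left Ext_E-acyclic in degree n, then Y is left Ext_E-acyclic in degree n. -/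
open CategoryTheory CategoryTheory.Limits CategoryTheory.Pretriangulated

universe v u

variable {C : Type u} [Category.{v} C] [Preadditive C] [HasBinaryBiproducts C]

/-- If `X` and `cone(f)` are left Ext-acyclic in degree `n`, then so is `Y`. -/
theorem stmt_5 (E : ExactStructure C) {X Y : CochainComplex C ℤ} (f : X ⟶ Y) (n : ℤ)
    (hX : E.LeftExtAcyclicAt X n)
    (hc : E.LeftExtAcyclicAt (CochainComplex.mappingCone f) n) :
    E.LeftExtAcyclicAt Y n := by
  intro A a ha
  -- lift `a` to the mapping cone via `inr`
  obtain ⟨B₁, p₁, h₁, hp₁, eq₁⟩ := hc (a ≫ (CochainComplex.mappingCone.inr f).f n)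
    (by rw [Category.assoc, CochainComplex.mappingCone.inr_f_d, ← Category.assoc, ha, zero_comp])
  set b : B₁ ⟶ X.X n := h₁ ≫ (CochainComplex.mappingCone.fst f).1.v (n - 1) n (by omega)
    with hb
  set c : B₁ ⟶ Y.X (n - 1) := h₁ ≫ (CochainComplex.mappingCone.snd f).v (n - 1) (n - 1)
    (add_zero _) with hcdef
  have hbd : b ≫ X.d n (n + 1) = 0 := by
    have := congrArg (fun g => g ≫ (CochainComplex.mappingCone.fst f).1.v n (n + 1) rfl) eq₁
    simp only [Category.assoc, CochainComplex.mappingCone.inr_f_fst_v, comp_zero,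
      CochainComplex.mappingCone.d_fst_v f (n - 1) n (n + 1) (by omega) rfl] at this
    rw [hb, Category.assoc]
    simp only [Preadditive.comp_neg] at this
    rw [← neg_eq_zero, ← this]
  have key : p₁ ≫ a = b ≫ f.f n + c ≫ Y.d (n - 1) n := by
    have := congrArg (fun g => g ≫ (CochainComplex.mappingCone.snd f).v n n (add_zero n)) eq₁
    simp only [Category.assoc, CochainComplex.mappingCone.inr_f_snd_v, Category.comp_id,
      CochainComplex.mappingCone.d_snd_v f (n - 1) n (by omega),
      Preadditive.comp_add] at this
    rw [this, hb, hcdef]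
    simp only [Category.assoc]
  obtain ⟨B₂, p₂, h₂, hp₂, eq₂⟩ := hX b hbd
  refine ⟨B₂, p₂ ≫ p₁, h₂ ≫ f.f (n - 1) + p₂ ≫ c, E.defl_comp hp₂ hp₁, ?_⟩
  rw [Category.assoc, key, Preadditive.comp_add, Preadditive.add_comp, ← Category.assoc, eq₂,
    Category.assoc, Category.assoc, Category.assoc, f.comm (n - 1) n]
  simp only [hcdef, Category.assoc]
end

section
/- Let E be an exact category and f : X → Y a morphism of cochain complexes over E. If Y is left Ext_E-acyclic in degree n and cone(f) is left Ext_E-acyclic in degree n-1, then X is left Ext_E-acyclic in degree n. -/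
open CategoryTheory CategoryTheory.Limits CategoryTheory.Pretriangulated

universe v u

variable {C : Type u} [Category.{v} C] [Preadditive C] [HasBinaryBiproducts C]

/-- If `Y` is left Ext-acyclic in degree `n` and `cone(f)` is left Ext-acyclic in degree
`n-1`, then `X` is left Ext-acyclic in degree `n`. -/
theorem stmt_6 (E : ExactStructure C) {X Y : CochainComplex C ℤ} (f : X ⟶ Y) (n : ℤ)
    (hY : E.LeftExtAcyclicAt Y n)
    (hc : E.LeftExtAcyclicAt (CochainComplex.mappingCone f) (n - 1)) :
    E.LeftExtAcyclicAt X n := by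
  intro A a ha
  -- Step 1: apply acyclicity of Y to `a ≫ f.f n`
  obtain ⟨B₁, p₁, h₁, hp₁, eq₁⟩ := hY (a ≫ f.f n) (by
    rw [Category.assoc, f.comm n (n + 1), ← Category.assoc, ha, zero_comp])
  -- Step 2: build a cycle in the mapping cone in degree `n - 1`
  open CochainComplex.mappingCone in
  set b : B₁ ⟶ (CochainComplex.mappingCone f).X (n - 1) :=
    p₁ ≫ a ≫ (inl f).v n (n - 1) (by omega) - h₁ ≫ (inr f).f (n - 1) with hb_def
  have hb : b ≫ (CochainComplex.mappingCone f).d (n - 1) (n - 1 + 1) = 0 := by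
    rw [show n - 1 + 1 = n by omega]
    have hd := inl_v_d f n (n - 1) (n + 1) (by omega) (by omega)
    simp only [hb_def, Preadditive.sub_comp, Category.assoc, hd, inr_f_d]
    simp only [Preadditive.comp_sub, ← Category.assoc]
    rw [Category.assoc p₁ a (X.d n (n + 1)), ha, comp_zero, zero_comp, sub_zero,
      Category.assoc p₁ a (f.f n), eq₁, sub_self]
  -- Step 3: apply acyclicity of the cone
  obtain ⟨B₂, p₂, h₂, hp₂, eq₂⟩ := hc b hb
  refine ⟨B₂, p₂ ≫ p₁, -(h₂ ≫ (fst f).1.v (n - 1 - 1) (n - 1) (by omega)),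
    E.defl_comp hp₂ hp₁, ?_⟩
  -- Step 4: extract the first component
  have eq₃ := congrArg (fun g => g ≫ (fst f).1.v (n - 1) n (by omega)) eq₂
  simp only [hb_def, Category.assoc, Preadditive.sub_comp, Preadditive.comp_sub,
    inl_v_fst_v, inr_f_fst_v, comp_zero, sub_zero, Category.comp_id,
    d_fst_v_assoc f (n - 1 - 1) (n - 1) n (by omega) (by omega),
    d_fst_v f (n - 1 - 1) (n - 1) n (by omega) (by omega)] at eq₃
  simp only [Category.assoc, Preadditive.neg_comp, Preadditive.comp_neg] at eq₃ ⊢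
  rw [eq₃]
end

section
/- Let E be an exact category. For any boundedness condition * ∈ {unbounded, bounded, left-bounded, right-bounded}, the full subcategory of the homotopy category K^*(E) consisting of complexes that are left Ext_E-acyclic in degree n is closed under direct summands, isomorphisms, and extensions (i.e., it is a thick-in-the-extension-closed sense subcategory: closed under cones of maps between shifts appropriately, extensions meaning the middle term of a triangle with outer terms in the class lies in the class). -/
open CategoryTheory CategoryTheory.Limits CategoryTheory.Pretriangulated

universe v u

variable {C : Type u} [Category.{v} C] [Preadditive C] [HasZeroObject C] [HasBinaryBiproducts C]


namespace ExactStructureProof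

open ExactStructure CochainComplex CochainComplex.mappingCone HomotopyCategory

variable (E : ExactStructure C) (n : ℤ)

/-- Retract lemma at the chain level. -/
lemma retract_acyclic {X Y : CochainComplex C ℤ} (e : X ⟶ Y) (r : Y ⟶ X)
    (H : Homotopy (e ≫ r) (𝟙 X)) (hY : E.LeftExtAcyclicAt Y n) :
    E.LeftExtAcyclicAt X n := by
  intro A a ha
  have h0 : (a ≫ e.f n) ≫ Y.d n (n + 1) = 0 := by
    rw [Category.assoc, e.comm n (n + 1), ← Category.assoc, ha, zero_comp]
  obtain ⟨B, p, h, hp, hcomm⟩ := hY (a ≫ e.f n) h0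
  refine ⟨B, p, h ≫ r.f (n - 1) - p ≫ a ≫ H.hom n (n - 1), hp, ?_⟩
  have hc := H.comm n
  rw [dNext_eq H.hom (show (ComplexShape.up ℤ).Rel n (n + 1) by simp),
    prevD_eq H.hom (show (ComplexShape.up ℤ).Rel (n - 1) n by simp)] at hc
  have hc' : e.f n ≫ r.f n =
      X.d n (n + 1) ≫ H.hom (n + 1) n + H.hom n (n - 1) ≫ X.d (n - 1) n + 𝟙 (X.X n) := by
    simpa using hc
  have key : p ≫ a ≫ e.f n ≫ r.f n =
      p ≫ a + p ≫ a ≫ H.hom n (n - 1) ≫ X.d (n - 1) n := by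
    rw [hc']
    simp only [Preadditive.comp_add, Category.comp_id]
    rw [← Category.assoc a, ha]
    simp only [zero_comp, Limits.comp_zero, zero_add]
    abel
  have key2 : p ≫ a ≫ e.f n ≫ r.f n = h ≫ r.f (n - 1) ≫ X.d (n - 1) n :=
    calc p ≫ a ≫ e.f n ≫ r.f n = (p ≫ a ≫ e.f n) ≫ r.f n := by
          simp only [Category.assoc]
      _ = (h ≫ Y.d (n - 1) n) ≫ r.f n := by rw [hcomm]
      _ = h ≫ r.f (n - 1) ≫ X.d (n - 1) n := by
          rw [Category.assoc, r.comm (n - 1) n]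
  rw [Preadditive.sub_comp]
  simp only [Category.assoc]
  rw [← key2, key]
  abel

/-- Retract lemma at the homotopy-category level. -/
lemma retract_acyclic' (X Y : HomotopyCategory C (ComplexShape.up ℤ)) (e : X ⟶ Y) (r : Y ⟶ X)
    (h : e ≫ r = 𝟙 X) (hY : E.LeftExtAcyclicAt Y.as n) : E.LeftExtAcyclicAt X.as n := by
  have H : Homotopy (e.out ≫ r.out) (𝟙 X.as) := by
    apply homotopyOfEq
    rw [CategoryTheory.Functor.map_comp, quotient_map_out, quotient_map_out]
    exact h
  exact retract_acyclic E n e.out r.out H hY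

lemma iso_acyclic (X Y : HomotopyCategory C (ComplexShape.up ℤ)) (h : Nonempty (X ≅ Y))
    (hY : E.LeftExtAcyclicAt Y.as n) : E.LeftExtAcyclicAt X.as n := by
  obtain ⟨e⟩ := h
  exact retract_acyclic' E n X Y e.hom e.inv e.hom_inv_id hY

/-- Extension lemma at the chain level, via mapping cones. -/
lemma cone_acyclic {X Y : CochainComplex C ℤ} (φ : X ⟶ Y)
    (hX : E.LeftExtAcyclicAt X n) (hM : E.LeftExtAcyclicAt (mappingCone φ) n) :
    E.LeftExtAcyclicAt Y n := by
  intro A b hb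
  have h0 : (b ≫ (inr φ).f n) ≫ (mappingCone φ).d n (n + 1) = 0 := by
    rw [Category.assoc, inr_f_d, ← Category.assoc, hb, zero_comp]
  obtain ⟨B₁, p, h, hp, h1⟩ := hM (b ≫ (inr φ).f n) h0
  set h₁ : B₁ ⟶ X.X n := h ≫ (fst φ).1.v (n - 1) n (by omega) with hh₁
  set h₂ : B₁ ⟶ Y.X (n - 1) := h ≫ (snd φ).v (n - 1) (n - 1) (add_zero _) with hh₂
  have hd1 : h₁ ≫ X.d n (n + 1) = 0 := by
    have h5 := h1 =≫ ((fst φ).1.v n (n + 1) rfl)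
    simp only [Category.assoc, inr_f_fst_v, Limits.comp_zero,
      d_fst_v φ (n - 1) n (n + 1) (by omega) rfl, Preadditive.comp_neg,
      Preadditive.neg_comp, neg_eq_zero, zero_eq_neg] at h5
    rw [hh₁, Category.assoc]
    exact h5
  obtain ⟨B₂, q, k, hq, h2⟩ := hX h₁ hd1
  refine ⟨B₂, q ≫ p, k ≫ φ.f (n - 1) + q ≫ h₂, E.defl_comp hq hp, ?_⟩
  have hpb : p ≫ b = h₁ ≫ φ.f n + h₂ ≫ Y.d (n - 1) n := by
    have := h1 =≫ ((snd φ).v n n (add_zero _))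
    simp only [Category.assoc, inr_f_snd_v, Category.comp_id] at this
    rw [d_snd_v φ (n - 1) n (by omega)] at this
    simpa only [Preadditive.comp_add, Category.assoc, hh₁, hh₂] using this
  rw [Category.assoc, hpb]
  simp only [Preadditive.comp_add, Preadditive.add_comp, Category.assoc]
  congr 1
  rw [← Category.assoc, h2, Category.assoc, ← φ.comm (n - 1) n, ← Category.assoc]

end ExactStructureProof

/-- In the homotopy category, the class of complexes which are left Ext-acyclic in degree
`n` is closed under direct summands (retracts), isomorphisms and extensions. -/
theorem stmt_7 (E : ExactStructure C) (n : ℤ) :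
    (∀ (X Y : HomotopyCategory C (ComplexShape.up ℤ)) (e : X ⟶ Y) (r : Y ⟶ X),
        e ≫ r = 𝟙 X → E.LeftExtAcyclicAt Y.as n → E.LeftExtAcyclicAt X.as n) ∧
    (∀ X Y : HomotopyCategory C (ComplexShape.up ℤ), Nonempty (X ≅ Y) →
        E.LeftExtAcyclicAt Y.as n → E.LeftExtAcyclicAt X.as n) ∧
    (∀ T : Triangle (HomotopyCategory C (ComplexShape.up ℤ)),
        (T ∈ distTriang (HomotopyCategory C (ComplexShape.up ℤ))) →
        E.LeftExtAcyclicAt T.obj₁.as n → E.LeftExtAcyclicAt T.obj₃.as n →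
        E.LeftExtAcyclicAt T.obj₂.as n) := by
  refine ⟨ExactStructureProof.retract_acyclic' E n, ExactStructureProof.iso_acyclic E n, ?_⟩
  intro T hT h₁ h₃
  obtain ⟨X, Y, φ, ⟨e⟩⟩ := hT
  have e₁ : T.obj₁ ≅ (CochainComplex.mappingCone.triangleh φ).obj₁ :=
    (Triangle.π₁).mapIso e
  have e₂ : T.obj₂ ≅ (CochainComplex.mappingCone.triangleh φ).obj₂ :=
    (Triangle.π₂).mapIso e
  have e₃ : T.obj₃ ≅ (CochainComplex.mappingCone.triangleh φ).obj₃ :=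
    (Triangle.π₃).mapIso e
  have hX : E.LeftExtAcyclicAt X n :=
    ExactStructureProof.iso_acyclic E n _ T.obj₁ ⟨e₁.symm⟩ h₁
  have hM : E.LeftExtAcyclicAt (CochainComplex.mappingCone φ) n :=
    ExactStructureProof.iso_acyclic E n _ T.obj₃ ⟨e₃.symm⟩ h₃
  exact ExactStructureProof.iso_acyclic E n T.obj₂ _ ⟨e₂⟩
    (ExactStructureProof.cone_acyclic E n φ hX hM)
end

section
/- Let E be a small exact category. A sequence L --f--> M --g--> N in E with gf = 0 is left Ext_E-acyclic if and only if the induced sequence of representable functors Y(L) → Y(M) → Y(N) is exact (acyclic at the middle) in the quotient abelian category Mod(E)/Eff(E) of the category of additive functors E^op → Ab by the Serre subcategory of locally effaceable functors. -/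
open CategoryTheory CategoryTheory.Limits CategoryTheory.Pretriangulated

universe v u


namespace CategoryTheory.ShortComplex

variable (S : ShortComplex AddCommGrpCat.{u})

/-- The homology class of a cycle in a short complex of abelian groups. -/
noncomputable def abMk (a : S.X₂) (ha : S.g a = 0) : S.homology :=
  S.homologyπ (S.abCyclesIso.inv ⟨a, ha⟩)

lemma abMk_surjective (x : S.homology) : ∃ (a : S.X₂) (ha : S.g a = 0), x = S.abMk a ha := by
  obtain ⟨y, hy⟩ := (AddCommGrpCat.epi_iff_surjective S.homologyπ).1 inferInstance x
  set z := S.abCyclesIso.hom y with hz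
  refine ⟨z.1, z.2, ?_⟩
  show x = S.homologyπ (S.abCyclesIso.inv z)
  have : S.abCyclesIso.inv z = y := by
    rw [hz, ← comp_apply, Iso.hom_inv_id, id_apply]
  rw [this, hy]

lemma abMk_eq_zero_iff (a : S.X₂) (ha : S.g a = 0) :
    S.abMk a ha = 0 ↔ ∃ l : S.X₁, S.f l = a := by
  have hinj : Function.Injective S.abLeftHomologyData.homologyIso.hom :=
    (AddCommGrpCat.mono_iff_injective _).1 inferInstance
  have key : S.abLeftHomologyData.homologyIso.hom (S.abMk a ha) =
      S.abLeftHomologyData.π ⟨a, ha⟩ := by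
    rw [abMk, ← comp_apply, S.abLeftHomologyData.homologyπ_comp_homologyIso_hom, comp_apply]
    congr 1
    show S.abLeftHomologyData.cyclesIso.hom (S.abLeftHomologyData.cyclesIso.inv _) = _
    exact S.abLeftHomologyData.cyclesIso.inv_hom_id_apply _
  have hπ : ∀ (z : AddMonoidHom.ker S.g.hom), (S.abLeftHomologyData.π z = 0 ↔
      z ∈ AddMonoidHom.range S.abToCycles) := by
    intro z
    exact QuotientAddGroup.eq_zero_iff z
  constructor
  · intro h
    have := congrArg S.abLeftHomologyData.homologyIso.hom h
    rw [map_zero, key] at this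
    obtain ⟨l, hl⟩ := (hπ _).1 this
    exact ⟨l, by simpa only [Subtype.ext_iff, abToCycles_apply_coe] using hl⟩
  · rintro ⟨l, rfl⟩
    apply hinj
    rw [map_zero, key]
    exact (hπ _).2 ⟨l, rfl⟩

variable {S} {S₂ : ShortComplex AddCommGrpCat.{u}}

lemma homologyMap_abMk (φ : S ⟶ S₂) (a : S.X₂) (ha : S.g a = 0) :
    homologyMap φ (S.abMk a ha) = S₂.abMk (φ.τ₂ a)
      (by rw [← comp_apply, φ.comm₂₃, comp_apply, ha]; exact map_zero _) := by
  dsimp only [abMk]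
  rw [← comp_apply, homologyπ_naturality, comp_apply]
  congr 1
  apply (AddCommGrpCat.mono_iff_injective S₂.iCycles).1 inferInstance
  rw [← comp_apply, cyclesMap_i, comp_apply]
  rw [S.abCyclesIso_inv_apply_iCycles, S₂.abCyclesIso_inv_apply_iCycles]

end CategoryTheory.ShortComplex

variable {C : Type u} [SmallCategory C] [Preadditive C]

/-- A functor `F : Cᵒᵖ ⥤ Ab` is locally effaceable if every element of `F(A)` is killed
by restriction along some deflation `B ⟶ A`. -/
def LocEff (E : ExactStructure C) (F : Cᵒᵖ ⥤ AddCommGrpCat.{u}) : Prop :=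
  ∀ (A : C) (x : F.obj (Opposite.op A)), ∃ (B : C) (p : B ⟶ A),
    E.Deflation p ∧ F.map p.op x = 0

/-- A sequence in `E` is left Ext-acyclic iff the sequence of representable functors is
exact at the middle in `Mod(E)/Eff(E)`, i.e. the homology of
`Y(L) ⟶ Y(M) ⟶ Y(N)` at `Y(M)` is locally effaceable. -/
theorem stmt_13 (E : ExactStructure C) {L M N : C} (f : L ⟶ M) (g : M ⟶ N)
    (hfg : f ≫ g = 0) :
    E.LeftExtAcyclic f g ↔
      LocEff E (ShortComplex.mk (preadditiveYoneda.map f) (preadditiveYoneda.map g)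
        (by rw [← Functor.map_comp, hfg, Functor.map_zero])).homology := by
  set S : ShortComplex (Cᵒᵖ ⥤ AddCommGrpCat.{u}) := ShortComplex.mk (preadditiveYoneda.map f)
    (preadditiveYoneda.map g) (by rw [← Functor.map_comp, hfg, Functor.map_zero]) with hSdef
  let ev : C → ((Cᵒᵖ ⥤ AddCommGrpCat.{u}) ⥤ AddCommGrpCat.{u}) :=
    fun A => (evaluation Cᵒᵖ AddCommGrpCat.{u}).obj (Opposite.op A)
  have hx0 : ∀ {A B : C} (p : B ⟶ A) (x : S.homology.obj (Opposite.op A)),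
      S.homology.map p.op x = 0 ↔
        ShortComplex.homologyMap (S.mapNatTrans ((evaluation Cᵒᵖ AddCommGrpCat.{u}).map p.op))
          ((S.mapHomologyIso (ev A)).inv x) = 0 := by
    intro A B p x
    have happ := NatTrans.app_homology ((evaluation Cᵒᵖ AddCommGrpCat.{u}).map p.op) S
    have h1 : S.homology.map p.op x =
        ((evaluation Cᵒᵖ AddCommGrpCat.{u}).map p.op).app S.homology x := rfl
    rw [h1, happ, comp_apply, comp_apply]
    have hinj : Function.Injective (S.mapHomologyIso (ev B)).hom :=
      (AddCommGrpCat.mono_iff_injective _).1 inferInstance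
    constructor
    · intro h
      apply hinj
      rw [h, AddMonoidHom.map_zero]
    · intro h
      rw [h, AddMonoidHom.map_zero]
  constructor
  · intro hacyclic A x
    obtain ⟨a, ha, hy⟩ := (S.map (ev A)).abMk_surjective ((S.mapHomologyIso (ev A)).inv x)
    have hag : (a : A ⟶ M) ≫ g = 0 := ha
    obtain ⟨B, p, h, hdefl, hcomm⟩ := hacyclic a hag
    refine ⟨B, p, hdefl, ?_⟩
    rw [hx0 p x, hy, ShortComplex.homologyMap_abMk, ShortComplex.abMk_eq_zero_iff]
    exact ⟨h, hcomm.symm⟩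
  · intro hloc A a hag
    have ha : (S.map (ev A)).g a = 0 := hag
    obtain ⟨B, p, hdefl, hzero⟩ :=
      hloc A ((S.mapHomologyIso (ev A)).hom ((S.map (ev A)).abMk a ha))
    rw [hx0 p] at hzero
    have hinv : (S.mapHomologyIso (ev A)).inv ((S.mapHomologyIso (ev A)).hom
        ((S.map (ev A)).abMk a ha)) = (S.map (ev A)).abMk a ha := by
      rw [← comp_apply, Iso.hom_inv_id, id_apply]
    rw [hinv, ShortComplex.homologyMap_abMk
      (S.mapNatTrans ((evaluation Cᵒᵖ AddCommGrpCat.{u}).map p.op)) a ha,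
      ShortComplex.abMk_eq_zero_iff] at hzero
    obtain ⟨l, hl⟩ := hzero
    exact ⟨B, p, l, hdefl, hl.symm⟩
end

section
/- Let E be a small exact category and E ⊆ F a resolving subcategory with F small. A functor G ∈ Mod(F) is locally effaceable over F if and only if its restriction r(G) ∈ Mod(E) along the inclusion E ⊆ F is locally effaceable over E. -/
open CategoryTheory CategoryTheory.Limits CategoryTheory.Pretriangulated

universe v u

variable {C : Type u} [SmallCategory C] [Preadditive C]

/-- `G : Fᵒᵖ ⥤ Ab` is locally effaceable over `F` iff its restriction to a resolving
subcategory `E ⊆ F` (given by the predicate `P`) is locally effaceable over `E`. -/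
theorem stmt_14 (F : ExactStructure C) (P : C → Prop)
    -- `P` is extension-closed (fully exact subcategory)
    (hext : ∀ ⦃X Y Z : C⦄ (i : X ⟶ Y) (p : Y ⟶ Z),
      F.IsConflation i p → P X → P Z → P Y)
    -- (R1): every object of `F` admits a deflation from an object of `E`
    (hgen : ∀ M : C, ∃ (L : C) (p : L ⟶ M), P L ∧ F.Deflation p)
    -- (R2): `E` is deflation-closed in `F`
    (hdefl : ∀ ⦃X Y Z : C⦄ (i : X ⟶ Y) (p : Y ⟶ Z),
      F.IsConflation i p → P Y → P Z → P X)
    (G : Cᵒᵖ ⥤ AddCommGrpCat.{u}) :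
    -- `G` is locally effaceable over `F` ...
    (∀ (A : C) (x : G.obj (Opposite.op A)), ∃ (B : C) (p : B ⟶ A),
      F.Deflation p ∧ G.map p.op x = 0) ↔
    -- ... iff its restriction is locally effaceable over `E`
    (∀ (A : C), P A → ∀ x : G.obj (Opposite.op A), ∃ (B : C) (p : B ⟶ A), P B ∧
      (∃ (K : C) (i : K ⟶ B), F.IsConflation i p ∧ P K) ∧ G.map p.op x = 0) := by
  constructor
  · intro h A hA x
    obtain ⟨B, p, hp, hpx⟩ := h A x
    obtain ⟨L, q, hL, hq⟩ := hgen B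
    have hcomp : F.Deflation (q ≫ p) := F.defl_comp hq hp
    obtain ⟨K, i, hi⟩ := hcomp
    refine ⟨L, q ≫ p, hL, ⟨K, i, hi, hdefl i (q ≫ p) hi hL hA⟩, ?_⟩
    rw [op_comp, G.map_comp]
    simp only [AddCommGrpCat.coe_comp, Function.comp_apply, hpx, map_zero]
  · intro h A x
    obtain ⟨L, q, hL, hq⟩ := hgen A
    obtain ⟨B, p, _, ⟨K, i, hi, _⟩, hpx⟩ := h L hL (G.map q.op x)
    refine ⟨B, p ≫ q, F.defl_comp ⟨K, i, hi⟩ hq, ?_⟩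
    rw [op_comp, G.map_comp]
    simpa using hpx
end
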